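/- (Finite square-loss AUC decomposition) Let P and N be nonempty finite subsets of X and f : X → ℝ. Let a = (1/|P|)·Σ_{x∈P} f(x) and b = (1/|N|)·Σ_{x'∈N} f(x'). Then (1/(|P||N|))·Σ_{x∈P} Σ_{x'∈N} (1 − f(x) + f(x'))² = (1/|P|)·Σ_{x∈P} (f(x) − a)² + (1/|N|)·Σ_{x'∈N} (f(x') − b)² + (1 − a + b)². -/

import Mathlib

/-- finite square-loss AUC decomposition: for nonempty finite sets
`P`, `N` and a score `f`, with `a`, `b` the averages of `f` over `P` and `N`,
`(1/(|P||N|))·Σ_{x∈P} Σ_{x'∈N} (1 − f(x) + f(x'))²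
  = (1/|P|)·Σ_{x∈P} (f(x) − a)² + (1/|N|)·Σ_{x'∈N} (f(x') − b)² + (1 − a + b)²`. -/
theorem finite_square_loss_auc_decomposition {X : Type*}
    (P N : Finset X) (hP : P.Nonempty) (hN : N.Nonempty) (f : X → ℝ) :
    ((1 : ℝ) / ((P.card : ℝ) * (N.card : ℝ))) *
        ∑ x ∈ P, ∑ x' ∈ N, (1 - f x + f x') ^ 2 =
      ((1 : ℝ) / (P.card : ℝ)) *
          ∑ x ∈ P, (f x - ((1 : ℝ) / (P.card : ℝ)) * ∑ y ∈ P, f y) ^ 2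
      + ((1 : ℝ) / (N.card : ℝ)) *
          ∑ x' ∈ N, (f x' - ((1 : ℝ) / (N.card : ℝ)) * ∑ y ∈ N, f y) ^ 2
      + (1 - ((1 : ℝ) / (P.card : ℝ)) * ∑ y ∈ P, f y
          + ((1 : ℝ) / (N.card : ℝ)) * ∑ y ∈ N, f y) ^ 2 := by
  have hp : (P.card : ℝ) ≠ 0 := (Nat.cast_pos.mpr hP.card_pos).ne'
  have hn : (N.card : ℝ) ≠ 0 := (Nat.cast_pos.mpr hN.card_pos).ne'
  set a : ℝ := ((1 : ℝ) / (P.card : ℝ)) * ∑ y ∈ P, f y with ha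
  set b : ℝ := ((1 : ℝ) / (N.card : ℝ)) * ∑ y ∈ N, f y with hb
  have hsP : ∑ x ∈ P, (f x - a) = 0 := by
    rw [Finset.sum_sub_distrib, Finset.sum_const, nsmul_eq_mul, ha]
    field_simp
    ring
  have hsN : ∑ x ∈ N, (f x - b) = 0 := by
    rw [Finset.sum_sub_distrib, Finset.sum_const, nsmul_eq_mul, hb]
    field_simp
    ring
  have key : ∑ x ∈ P, ∑ x' ∈ N, (1 - f x + f x') ^ 2
      = (N.card : ℝ) * ∑ x ∈ P, (f x - a) ^ 2
        + (P.card : ℝ) * ∑ x' ∈ N, (f x' - b) ^ 2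
        + (P.card : ℝ) * (N.card : ℝ) * (1 - a + b) ^ 2 := by
    have expand : ∀ x x' : X, (1 - f x + f x') ^ 2
        = (f x - a) ^ 2 + (f x' - b) ^ 2 + (1 - a + b) ^ 2
          + 2 * ((a - f x) * (f x' - b))
          + 2 * ((a - f x) * (1 - a + b))
          + 2 * ((f x' - b) * (1 - a + b)) := by
      intro x x'; ring
    have inner : ∀ x ∈ P, ∑ x' ∈ N, (1 - f x + f x') ^ 2
        = (N.card : ℝ) * (f x - a) ^ 2 + ∑ x' ∈ N, (f x' - b) ^ 2
          + (N.card : ℝ) * (1 - a + b) ^ 2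
          + (N.card : ℝ) * (2 * ((a - f x) * (1 - a + b))) := by
      intro x _
      rw [Finset.sum_congr rfl fun x' _ => expand x x']
      simp only [Finset.sum_add_distrib, Finset.sum_const, nsmul_eq_mul]
      have c1 : ∑ x' ∈ N, 2 * ((a - f x) * (f x' - b))
          = 2 * (a - f x) * ∑ x' ∈ N, (f x' - b) := by
        rw [Finset.mul_sum]; exact Finset.sum_congr rfl fun _ _ => by ring
      have c2 : ∑ x' ∈ N, 2 * ((f x' - b) * (1 - a + b))
          = 2 * (1 - a + b) * ∑ x' ∈ N, (f x' - b) := by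
        rw [Finset.mul_sum]; exact Finset.sum_congr rfl fun _ _ => by ring
      rw [c1, c2, hsN]
      ring
    rw [Finset.sum_congr rfl inner]
    simp only [Finset.sum_add_distrib, Finset.sum_const, nsmul_eq_mul,
      ← Finset.mul_sum, ← Finset.sum_mul]
    have h2 : ∑ x ∈ P, (a - f x) = 0 := by
      have := hsP
      have : ∑ x ∈ P, (a - f x) = -∑ x ∈ P, (f x - a) := by
        rw [← Finset.sum_neg_distrib]; apply Finset.sum_congr rfl; intros; ring
      rw [this, hsP]; ring
    rw [h2]
    ring
  rw [key]
  field_simp
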